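/- arXiv:1508.07983 — 2 statements merged into one kernel-verified Lean document; each statement's English description precedes it below -/
import Mathlib

section
/- Let (E, τ) be a bornological ordered locally convex space with an order bounded τ-neighborhood of zero. Then E is order bornological. -/
open Topology Filter Set Pointwise LatticeOrderedAddCommGroup

variable {E : Type*} {E₁ : Type*} {E₂ : Type*}

/-- A set is order bounded if it is contained in some order interval. -/
def OrderBounded [Preorder E] (s : Set E) : Prop := ∃ x y : E, s ⊆ Set.Icc x y

/-- A set `B` is order bornivorous if it absorbs every order bounded set. -/
def OrderBornivorous [Preorder E] [SMul ℝ E] (B : Set E) : Prop :=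
  ∀ D : Set E, OrderBounded D → Absorbs ℝ B D

/-- A topology is locally solid if every neighborhood of zero contains a solid
neighborhood of zero. -/
def LocallySolid (E : Type*) [Lattice E] [AddCommGroup E] [TopologicalSpace E] : Prop :=
  ∀ V ∈ 𝓝 (0 : E), ∃ S ∈ 𝓝 (0 : E), S ⊆ V ∧ IsSolid S

theorem orderBornological_of_bornological_orderBounded_nhd
    [AddCommGroup E] [PartialOrder E] [CovariantClass E E (· + ·) (· ≤ ·)]
    [Module ℝ E] [PosSMulMono ℝ E]
    [TopologicalSpace E] [IsTopologicalAddGroup E] [ContinuousSMul ℝ E]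
    [LocallyConvexSpace ℝ E]
    (hV : ∃ V ∈ 𝓝 (0 : E), OrderBounded V)
    (hborn : ∀ B : Set E, (∀ D : Set E, Bornology.IsVonNBounded ℝ D → Absorbs ℝ B D) →
      Balanced ℝ B → Convex ℝ B → B ∈ 𝓝 (0 : E))
    (B : Set E) (hob : OrderBornivorous B) (hbal : Balanced ℝ B) (hconv : Convex ℝ B) :
    B ∈ 𝓝 (0 : E) := by
  obtain ⟨V, hVnhds, x, y, hVxy⟩ := hV
  apply hborn B _ hbal hconv
  intro D hD
  have habs : Absorbs ℝ V D := hD hVnhds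
  rw [absorbs_iff_norm] at habs
  obtain ⟨c, hc⟩ := habs
  set a : ℝ := max c 1 with ha
  have ha1 : (1:ℝ) ≤ a := le_max_right _ _
  have ha0 : (0:ℝ) ≤ a := by linarith
  have hDa : D ⊆ a • V := hc a (by rw [Real.norm_eq_abs, abs_of_nonneg ha0]; exact le_max_left c 1)
  apply hob D
  refine ⟨a • x, a • y, ?_⟩
  intro d hd
  obtain ⟨v, hv, rfl⟩ := hDa hd
  obtain ⟨hv1, hv2⟩ := hVxy hv
  exact ⟨smul_le_smul_of_nonneg_left hv1 ha0, smul_le_smul_of_nonneg_left hv2 ha0⟩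
end

section
/- Let E be a Riesz space. The collection τ_ob of all order bornivorous, balanced, convex subsets of E forms a neighborhood base at zero for a locally convex vector topology on E, and (E, τ_ob) is order bornological. -/
open Topology Filter Set Pointwise LatticeOrderedAddCommGroup

variable {E : Type*} {E₁ : Type*} {E₂ : Type*}

section Aux

variable [Lattice E] [AddCommGroup E] [Module ℝ E]

lemma orderBornivorous_smul {B : Set E} (hB : OrderBornivorous B) {c : ℝ} (hc : c ≠ 0) :
    OrderBornivorous (c • B) := by
  intro D hD
  rcases absorbs_iff_norm.1 (hB D hD) with ⟨r, hr⟩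
  refine absorbs_iff_norm.2 ⟨|r| / ‖c‖, fun a ha => ?_⟩
  have hc' : (0:ℝ) < ‖c‖ := norm_pos_iff.2 hc
  have h1 : r ≤ ‖a * c‖ := by
    rw [norm_mul]
    calc r ≤ |r| := le_abs_self r
    _ = |r| / ‖c‖ * ‖c‖ := by field_simp
    _ ≤ ‖a‖ * ‖c‖ := by
        apply mul_le_mul_of_nonneg_right ha hc'.le
  have := hr (a * c) h1
  rwa [mul_smul] at this

lemma orderBornivorous_zero_mem {B : Set E} (hB : OrderBornivorous B) : (0:E) ∈ B := by
  have h : OrderBounded ({0} : Set E) := ⟨0, 0, by simp⟩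
  have := hB {0} h
  rw [Set.singleton_zero] at this
  exact absorbs_zero_iff.1 this

end Aux

theorem orderBornivorous_sets_form_topology
    [Lattice E] [AddCommGroup E] [CovariantClass E E (· + ·) (· ≤ ·)]
    [Module ℝ E] [PosSMulMono ℝ E] :
    ∃ t : TopologicalSpace E,
      @IsTopologicalAddGroup E t _ ∧
      @ContinuousSMul ℝ E _ _ t ∧
      @LocallyConvexSpace ℝ E _ _ _ _ t ∧
      (@nhds E t 0).HasBasis
        (fun B : Set E => OrderBornivorous B ∧ Balanced ℝ B ∧ Convex ℝ B) id ∧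
      (∀ B : Set E, OrderBornivorous B → Balanced ℝ B → Convex ℝ B →
        B ∈ @nhds E t 0) := by
  classical
  have hsm : ∀ {B : Set E}, (OrderBornivorous B ∧ Balanced ℝ B ∧ Convex ℝ B) →
      ∀ {c : ℝ}, c ≠ 0 → (OrderBornivorous (c • B) ∧ Balanced ℝ (c • B) ∧ Convex ℝ (c • B)) := by
    intro B hB c hc
    exact ⟨orderBornivorous_smul hB.1 hc, hB.2.1.smul _, hB.2.2.smul _⟩
  let FB : ModuleFilterBasis ℝ E :=
  { sets := {B | OrderBornivorous B ∧ Balanced ℝ B ∧ Convex ℝ B}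
    nonempty := ⟨univ, fun D _ => Absorbs.univ, balanced_univ, convex_univ⟩
    inter_sets := by
      rintro U V ⟨hU1, hU2, hU3⟩ ⟨hV1, hV2, hV3⟩
      exact ⟨U ∩ V, ⟨fun D hD => (hU1 D hD).inter (hV1 D hD), hU2.inter hV2,
        hU3.inter hV3⟩, subset_rfl⟩
    zero' := fun hU => orderBornivorous_zero_mem hU.1
    add' := by
      intro U hU
      refine ⟨(2⁻¹ : ℝ) • U, hsm hU (by norm_num), ?_⟩
      have h := hU.2.2.add_smul (by norm_num : (0:ℝ) ≤ 2⁻¹) (by norm_num : (0:ℝ) ≤ 2⁻¹)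
      rw [show (2⁻¹ + 2⁻¹ : ℝ) = 1 by norm_num, one_smul] at h
      rw [← h]
    neg' := fun {U} hU => ⟨U, hU, fun x hx => by
      simpa using hU.2.1.neg_mem_iff.2 hx⟩
    conj' := fun x₀ {U} hU => ⟨U, hU, fun x hx => by
      simpa [add_comm, add_assoc] using hx⟩
    smul' := by
      intro U hU
      refine ⟨Metric.ball (0:ℝ) 1, Metric.ball_mem_nhds 0 one_pos, U, hU, ?_⟩
      rw [Set.smul_subset_iff]
      intro c hc x hx
      exact hU.2.1.smul_mem (le_of_lt (by simpa using hc)) hx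
    smul_left' := by
      intro x₀ U hU
      rcases eq_or_ne x₀ 0 with rfl | h
      · exact ⟨U, hU, fun x _ => by
          simpa using orderBornivorous_zero_mem hU.1⟩
      · refine ⟨x₀⁻¹ • U, hsm hU (inv_ne_zero h), ?_⟩
        rintro _ ⟨y, hy, rfl⟩
        simpa [smul_smul, mul_inv_cancel₀ h] using hy
    smul_right' := by
      intro m₀ U hU
      have habs := hU.1 {m₀} ⟨m₀, m₀, by simp⟩
      rcases absorbs_iff_norm.1 habs with ⟨r, hr⟩
      have hball : Metric.ball (0:ℝ) (|r|+1)⁻¹ ∈ 𝓝 (0:ℝ) :=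
        Metric.ball_mem_nhds _ (by positivity)
      filter_upwards [hball] with c hc
      rcases eq_or_ne c 0 with rfl | h
      · simpa using orderBornivorous_zero_mem hU.1
      · have hcn : ‖c‖ < (|r|+1)⁻¹ := by simpa using hc
        have hcpos : (0:ℝ) < ‖c‖ := norm_pos_iff.2 h
        have h1 : r ≤ ‖c⁻¹‖ := by
          rw [norm_inv]
          calc r ≤ |r| := le_abs_self r
          _ ≤ |r| + 1 := by linarith
          _ ≤ ‖c‖⁻¹ := by
              rw [le_inv_comm₀ (by positivity) hcpos]
              exact hcn.le
        have := hr c⁻¹ h1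
        rcases Set.singleton_subset_iff.1 this with ⟨u, hu, hm⟩
        have : c • m₀ = u := by rw [← hm, smul_smul, mul_inv_cancel₀ h, one_smul]
        rwa [this] }
  letI t : TopologicalSpace E := FB.topology
  haveI := FB.toAddGroupFilterBasis.isTopologicalAddGroup
  haveI := FB.continuousSMul
  refine ⟨t, inferInstance, inferInstance, ?_, ?_, ?_⟩
  · exact LocallyConvexSpace.ofBasisZero ℝ E _ _
      FB.toAddGroupFilterBasis.nhds_zero_hasBasis (fun s hs => hs.2.2)
  · exact FB.toAddGroupFilterBasis.nhds_zero_hasBasis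
  · intro B h1 h2 h3
    exact FB.toAddGroupFilterBasis.nhds_zero_hasBasis.mem_of_mem ⟨h1, h2, h3⟩
end
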